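/- Let G be a connected graph of order n and S ⊆ V(G), with λ₁ ≥ ⋯ ≥ λ_n the eigenvalues of G_S. If the eigenvalues of G_{V(G)∖S} are exactly 1−λ_n ≥ ⋯ ≥ 1−λ₁, then G is bipartite. (Together with the converse, this characterizes bipartiteness.) -/

import Mathlib

open Matrix Finset

/-- The diagonal 0-1 matrix indicating the loop vertices in `S`. -/
def loopMat (n : ℕ) (S : Finset (Fin n)) : Matrix (Fin n) (Fin n) ℝ :=
  Matrix.of fun i j => if i = j ∧ i ∈ S then 1 else 0

private lemma myConjPow {n : ℕ} (V X : Matrix (Fin n) (Fin n) ℝ) (hV : V * star V = 1)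
    (hV' : star V * V = 1) (k : ℕ) : (V * X * star V) ^ k = V * X ^ k * star V := by
  induction k with
  | zero => simp [hV]
  | succ k ih =>
      rw [pow_succ, pow_succ, ih]
      calc V * X ^ k * star V * (V * X * star V)
          = V * X ^ k * (star V * V) * X * star V := by noncomm_ring
        _ = V * (X ^ k * X) * star V := by rw [hV']; noncomm_ring

private lemma myTraceConjPow {n : ℕ} (V : Matrix (Fin n) (Fin n) ℝ) (hV : V * star V = 1)
    (hV' : star V * V = 1) (d : Fin n → ℝ) (k : ℕ) :
    Matrix.trace ((V * Matrix.diagonal d * star V) ^ k) = ∑ i, d i ^ k := by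
  rw [myConjPow V _ hV hV' k, Matrix.trace_mul_cycle, hV', Matrix.one_mul,
    Matrix.diagonal_pow, Matrix.trace_diagonal]
  simp

private lemma myRealSpectral {n : ℕ} {H : Matrix (Fin n) (Fin n) ℝ} (hH : H.IsHermitian) :
    H = (hH.eigenvectorUnitary : Matrix (Fin n) (Fin n) ℝ) * Matrix.diagonal hH.eigenvalues *
      star (hH.eigenvectorUnitary : Matrix (Fin n) (Fin n) ℝ) := by
  conv_lhs => rw [hH.spectral_theorem]
  congr

private lemma myTracePowEq {n : ℕ} {H : Matrix (Fin n) (Fin n) ℝ} (hH : H.IsHermitian) (k : ℕ) :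
    Matrix.trace (H ^ k) = ∑ i, hH.eigenvalues i ^ k := by
  have hU1 : (hH.eigenvectorUnitary : Matrix (Fin n) (Fin n) ℝ) *
      star (hH.eigenvectorUnitary : Matrix (Fin n) (Fin n) ℝ) = 1 :=
    (Matrix.mem_unitaryGroup_iff).mp hH.eigenvectorUnitary.2
  have hU2 : star (hH.eigenvectorUnitary : Matrix (Fin n) (Fin n) ℝ) *
      (hH.eigenvectorUnitary : Matrix (Fin n) (Fin n) ℝ) = 1 :=
    (Matrix.mem_unitaryGroup_iff').mp hH.eigenvectorUnitary.2
  conv_lhs => rw [myRealSpectral hH]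
  exact myTraceConjPow _ hU1 hU2 _ k

private lemma myTraceOneSubPow {n : ℕ} {H : Matrix (Fin n) (Fin n) ℝ} (hH : H.IsHermitian)
    (k : ℕ) : Matrix.trace ((1 - H) ^ k) = ∑ i, (1 - hH.eigenvalues i) ^ k := by
  have hU1 : (hH.eigenvectorUnitary : Matrix (Fin n) (Fin n) ℝ) *
      star (hH.eigenvectorUnitary : Matrix (Fin n) (Fin n) ℝ) = 1 :=
    (Matrix.mem_unitaryGroup_iff).mp hH.eigenvectorUnitary.2
  have hU2 : star (hH.eigenvectorUnitary : Matrix (Fin n) (Fin n) ℝ) *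
      (hH.eigenvectorUnitary : Matrix (Fin n) (Fin n) ℝ) = 1 :=
    (Matrix.mem_unitaryGroup_iff').mp hH.eigenvectorUnitary.2
  have key : (1 : Matrix (Fin n) (Fin n) ℝ) - H =
      (hH.eigenvectorUnitary : Matrix (Fin n) (Fin n) ℝ) *
        Matrix.diagonal (fun i => 1 - hH.eigenvalues i) *
        star (hH.eigenvectorUnitary : Matrix (Fin n) (Fin n) ℝ) := by
    conv_lhs => rw [myRealSpectral hH, ← hU1]
    have : (Matrix.diagonal (fun i => 1 - hH.eigenvalues i) : Matrix (Fin n) (Fin n) ℝ)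
        = 1 - Matrix.diagonal hH.eigenvalues := by
      rw [← Matrix.diagonal_one, ← Matrix.diagonal_sub]
    rw [this]
    noncomm_ring
  rw [key]
  exact myTraceConjPow _ hU1 hU2 _ k

private lemma myKey {n : ℕ} (L M : Matrix (Fin n) (Fin n) ℝ)
    (hL : ∀ i j, 0 ≤ L i j) (hM : ∀ i j, 0 ≤ M i j) : ∀ g : ℕ,
    (∀ i j, 0 ≤ (((L + M) ^ g) + ((L - M) ^ g)) i j) ∧
    (∀ i j, 0 ≤ (((L + M) ^ g) - ((L - M) ^ g)) i j) ∧
    (Even g → ∀ i j, 2 * (M ^ g) i j ≤ (((L + M) ^ g) + ((L - M) ^ g)) i j) ∧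
    (Odd g → ∀ i j, 2 * (M ^ g) i j ≤ (((L + M) ^ g) - ((L - M) ^ g)) i j) := by
  intro g
  induction g with
  | zero =>
      refine ⟨?_, ?_, ?_, ?_⟩
      · intro i j; simp [Matrix.add_apply, Matrix.one_apply]
        split <;> norm_num
      · intro i j; simp
      · intro _ i j; simp [Matrix.add_apply, Matrix.one_apply]; split <;> norm_num
      · intro h; exact absurd h (by simp)
  | succ g ih =>
      obtain ⟨hb, ha, hbe, hao⟩ := ih
      have e1 : (L + M) ^ (g + 1) + (L - M) ^ (g + 1)
          = ((L + M) ^ g + (L - M) ^ g) * L + ((L + M) ^ g - (L - M) ^ g) * M := by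
        rw [pow_succ, pow_succ]; noncomm_ring
      have e2 : (L + M) ^ (g + 1) - (L - M) ^ (g + 1)
          = ((L + M) ^ g - (L - M) ^ g) * L + ((L + M) ^ g + (L - M) ^ g) * M := by
        rw [pow_succ, pow_succ]; noncomm_ring
      have hMn : ∀ i j, 2 * (M ^ (g + 1)) i j = ∑ k, (2 * (M ^ g) i k) * M k j := by
        intro i j
        rw [pow_succ, Matrix.mul_apply, Finset.mul_sum]
        exact Finset.sum_congr rfl fun k _ => by ring
      refine ⟨?_, ?_, ?_, ?_⟩
      · intro i j
        rw [e1, Matrix.add_apply, Matrix.mul_apply, Matrix.mul_apply]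
        have t1 : (0:ℝ) ≤ ∑ k, ((L + M) ^ g + (L - M) ^ g) i k * L k j :=
          Finset.sum_nonneg fun k _ => mul_nonneg (hb i k) (hL k j)
        have t2 : (0:ℝ) ≤ ∑ k, ((L + M) ^ g - (L - M) ^ g) i k * M k j :=
          Finset.sum_nonneg fun k _ => mul_nonneg (ha i k) (hM k j)
        linarith
      · intro i j
        rw [e2, Matrix.add_apply, Matrix.mul_apply, Matrix.mul_apply]
        have t1 : (0:ℝ) ≤ ∑ k, ((L + M) ^ g - (L - M) ^ g) i k * L k j :=
          Finset.sum_nonneg fun k _ => mul_nonneg (ha i k) (hL k j)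
        have t2 : (0:ℝ) ≤ ∑ k, ((L + M) ^ g + (L - M) ^ g) i k * M k j :=
          Finset.sum_nonneg fun k _ => mul_nonneg (hb i k) (hM k j)
        linarith
      · intro hev i j
        have hgo : Odd g := Nat.not_even_iff_odd.mp (Nat.even_add_one.mp hev)
        rw [e1, Matrix.add_apply, Matrix.mul_apply, Matrix.mul_apply, hMn i j]
        have t1 : (0:ℝ) ≤ ∑ k, ((L + M) ^ g + (L - M) ^ g) i k * L k j :=
          Finset.sum_nonneg fun k _ => mul_nonneg (hb i k) (hL k j)
        have t2 : ∑ k, (2 * (M ^ g) i k) * M k j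
            ≤ ∑ k, ((L + M) ^ g - (L - M) ^ g) i k * M k j :=
          Finset.sum_le_sum fun k _ => mul_le_mul_of_nonneg_right (hao hgo i k) (hM k j)
        linarith
      · intro hod i j
        have hge : Even g := Nat.not_odd_iff_even.mp (Nat.odd_add_one.mp hod)
        rw [e2, Matrix.add_apply, Matrix.mul_apply, Matrix.mul_apply, hMn i j]
        have t1 : (0:ℝ) ≤ ∑ k, ((L + M) ^ g - (L - M) ^ g) i k * L k j :=
          Finset.sum_nonneg fun k _ => mul_nonneg (ha i k) (hL k j)
        have t2 : ∑ k, (2 * (M ^ g) i k) * M k j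
            ≤ ∑ k, ((L + M) ^ g + (L - M) ^ g) i k * M k j :=
          Finset.sum_le_sum fun k _ => mul_le_mul_of_nonneg_right (hbe hge i k) (hM k j)
        linarith

/-- let `G` be connected of order `n` and `S ⊆ V(G)`.  If the multiset of
eigenvalues of `G_{V∖S}` is exactly `{1 − λ : λ eigenvalue of G_S}`, then `G` is bipartite. -/
theorem complement_loops_spectrum_implies_bipartite (n : ℕ) (G : SimpleGraph (Fin n))
    [DecidableRel G.Adj] (hconn : G.Connected) (S : Finset (Fin n))
    (hA : (G.adjMatrix ℝ + loopMat n S).IsHermitian)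
    (hB : (G.adjMatrix ℝ + loopMat n Sᶜ).IsHermitian)
    (hspec : Finset.univ.val.map hB.eigenvalues =
      (Finset.univ.val.map hA.eigenvalues).map (fun x => 1 - x)) :
    G.Colorable 2 := by
  classical
  by_contra hcol
  obtain ⟨r⟩ := hconn.nonempty
  let p : (v : Fin n) → G.Walk r v := fun v => (hconn.preconnected r v).some
  let c : Fin n → Bool := fun v => decide ((p v).length % 2 = 0)
  by_cases hval : ∀ u v : Fin n, G.Adj u v → c u ≠ c v
  · exact hcol (by simpa using (SimpleGraph.Coloring.mk c fun {u v} h => hval u v h).colorable)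
  push_neg at hval
  obtain ⟨u, v, huv, hc⟩ := hval
  -- build an odd closed walk at r
  let w : G.Walk r r := (p u).append (SimpleGraph.Walk.cons huv (p v).reverse)
  have hodd : Odd w.length := by
    have hpar : ((p u).length % 2 = 0) ↔ ((p v).length % 2 = 0) := by
      simpa [c, decide_eq_decide] using hc
    have hlen : w.length = (p u).length + ((p v).length + 1) := by
      simp [w, SimpleGraph.Walk.length_append, SimpleGraph.Walk.length_cons,
        SimpleGraph.Walk.length_reverse]
    rw [Nat.odd_iff, hlen]
    omega
  set g := w.length with hgdef
  -- matrix setup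
  set M := G.adjMatrix ℝ with hMdef
  set L := loopMat n Sᶜ with hLdef
  have hMnn : ∀ i j, 0 ≤ M i j := by
    intro i j
    by_cases h : G.Adj i j <;> simp [hMdef, h]
  have hLnn : ∀ i j, 0 ≤ L i j := by
    intro i j
    rw [hLdef]
    unfold loopMat
    dsimp only [Matrix.of_apply]
    split <;> norm_num
  have hLS : loopMat n S + loopMat n Sᶜ = (1 : Matrix (Fin n) (Fin n) ℝ) := by
    ext i j
    by_cases hij : i = j
    · subst hij
      by_cases hiS : i ∈ S <;>
        simp [loopMat, Matrix.add_apply, Matrix.one_apply, Finset.mem_compl, hiS]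
    · simp [loopMat, Matrix.add_apply, Matrix.one_apply, hij]
  have hsum : ∀ k : ℕ, ∑ i, hB.eigenvalues i ^ k = ∑ i, (1 - hA.eigenvalues i) ^ k := by
    intro k
    have h := congrArg (fun m : Multiset ℝ => (m.map (fun x => x ^ k)).sum) hspec
    simpa [Multiset.map_map, Function.comp_def, Finset.sum] using h
  have htr : ∀ k : ℕ, Matrix.trace ((L + M) ^ k) = Matrix.trace ((L - M) ^ k) := by
    intro k
    have h1 : L + M = G.adjMatrix ℝ + loopMat n Sᶜ := add_comm _ _
    have h2 : L - M = 1 - (G.adjMatrix ℝ + loopMat n S) := by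
      rw [← hLS]; abel
    rw [h1, h2, myTracePowEq hB, myTraceOneSubPow hA]
    exact hsum k
  obtain ⟨-, -, -, hao⟩ := myKey L M hLnn hMnn g
  have hdiag := hao hodd
  have hstep : 2 * Matrix.trace (M ^ g) ≤ 0 := by
    have h1 : ∑ i, 2 * (M ^ g) i i ≤ ∑ i, (((L + M) ^ g) i i - ((L - M) ^ g) i i) :=
      Finset.sum_le_sum fun i _ => by simpa [Matrix.sub_apply] using hdiag i i
    have h2 : ∑ i, (((L + M) ^ g) i i - ((L - M) ^ g) i i)
        = Matrix.trace ((L + M) ^ g) - Matrix.trace ((L - M) ^ g) := by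
      rw [Finset.sum_sub_distrib]; rfl
    have h3 : ∑ i, 2 * (M ^ g) i i = 2 * Matrix.trace (M ^ g) := by
      rw [← Finset.mul_sum]; rfl
    rw [h3, h2, htr g] at h1
    linarith
  have hMgpos : 0 < Matrix.trace (M ^ g) := by
    have hdiagnn : ∀ i : Fin n, (0:ℝ) ≤ (M ^ g) i i := by
      intro i
      rw [hMdef, SimpleGraph.adjMatrix_pow_apply_eq_card_walk]
      exact Nat.cast_nonneg _
    have hrr : (0:ℝ) < (M ^ g) r r := by
      rw [hMdef, SimpleGraph.adjMatrix_pow_apply_eq_card_walk]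
      have : Nonempty {q : G.Walk r r | q.length = g} := ⟨⟨w, rfl⟩⟩
      exact_mod_cast Fintype.card_pos
    have : Matrix.trace (M ^ g) = ∑ i, (M ^ g) i i := rfl
    rw [this]
    exact Finset.sum_pos' (fun i _ => hdiagnn i) ⟨r, Finset.mem_univ r, hrr⟩
  linarith
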